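/- arXiv:1111.1226 — 2 statements merged into one kernel-verified Lean document; each statement's English description precedes it below -/
import Mathlib

section
/- Let β < 0 and μ ≥ 1, and let δ : ℝ₊ → ℝ₊ be locally integrable with lim_{t→∞} t^{-μ} ∫_0^t δ(s) ds = ν for some ν ≥ 0. Then lim_{t→∞} t^{-μ} ∫_0^t e^{2β(t-s)} δ(s) ds = 0. -/
open Real MeasureTheory Filter

private lemma sqrt_tendsto_atTop : Tendsto Real.sqrt atTop atTop :=
  tendsto_atTop_atTop_of_monotone (fun _ _ h => Real.sqrt_le_sqrt h)
    (fun b => ⟨b ^ 2, by rw [Real.sqrt_sq_eq_abs]; exact le_abs_self b⟩)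

private lemma sqrt_le_half {t : ℝ} (ht : 4 ≤ t) : Real.sqrt t ≤ t / 2 := by
  have h2 : (0:ℝ) ≤ t / 2 := by linarith
  rw [show t / 2 = Real.sqrt ((t / 2) ^ 2) by rw [Real.sqrt_sq h2]]
  exact Real.sqrt_le_sqrt (by nlinarith)

/-- If `β < 0`, `μ ≥ 1`, and `δ ≥ 0` is locally integrable with
`t^{-μ} ∫_0^t δ(s) ds → ν`, then `t^{-μ} ∫_0^t e^{2β(t-s)} δ(s) ds → 0`. -/
theorem stmt7 (β μ ν : ℝ) (δ : ℝ → ℝ)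
    (hβ : β < 0) (hμ : 1 ≤ μ) (hν : 0 ≤ ν)
    (hδmeas : Measurable δ)
    (hδnonneg : ∀ s, 0 ≤ δ s)
    (hδloc : ∀ t : ℝ, IntervalIntegrable δ volume 0 t)
    (havg : Tendsto (fun t : ℝ => (∫ s in (0:ℝ)..t, δ s) / t ^ μ) atTop (nhds ν)) :
    Tendsto (fun t : ℝ => (∫ s in (0:ℝ)..t, Real.exp (2 * β * (t - s)) * δ s) / t ^ μ)
      atTop (nhds 0) := by
  set F : ℝ → ℝ := fun t => ∫ s in (0:ℝ)..t, δ s with hFdef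
  have hδab : ∀ a b : ℝ, IntervalIntegrable δ volume a b := fun a b =>
    (hδloc a).symm.trans (hδloc b)
  have hFadd : ∀ a b : ℝ, F b - F a = ∫ s in a..b, δ s := by
    intro a b
    have h := intervalIntegral.integral_add_adjacent_intervals (hδloc a) (hδab a b)
    simp only [hFdef]
    linarith [h]
  have hFmono : Monotone F := by
    intro a b hab
    have h := hFadd a b
    have h2 : 0 ≤ ∫ s in a..b, δ s :=
      intervalIntegral.integral_nonneg hab (fun s _ => hδnonneg s)
    linarith
  -- integrability of the product on any interval
  have hint : ∀ t a b : ℝ,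
      IntervalIntegrable (fun s => Real.exp (2 * β * (t - s)) * δ s) volume a b := by
    intro t a b
    exact (hδab a b).continuousOn_mul (by fun_prop)
  -- the upper bound function
  set G : ℝ → ℝ := fun t =>
    Real.exp (2 * β * Real.sqrt t) * F t + (F t - F (t - Real.sqrt t)) with hGdef
  -- key pointwise bound
  have key : ∀ t : ℝ, 4 ≤ t →
      (∫ s in (0:ℝ)..t, Real.exp (2 * β * (t - s)) * δ s) ≤ G t := by
    intro t ht
    set u := t - Real.sqrt t with hu
    have hsq0 : 0 ≤ Real.sqrt t := Real.sqrt_nonneg t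
    have hsq : Real.sqrt t ≤ t / 2 := sqrt_le_half ht
    have h0u : 0 ≤ u := by simp only [hu]; linarith
    have hut : u ≤ t := by simp only [hu]; linarith
    have hsplit := intervalIntegral.integral_add_adjacent_intervals
      (hint t 0 u) (hint t u t)
    have hb1 : (∫ s in (0:ℝ)..u, Real.exp (2 * β * (t - s)) * δ s)
        ≤ Real.exp (2 * β * Real.sqrt t) * F u := by
      have := intervalIntegral.integral_mono_on h0u (hint t 0 u)
        ((hδab 0 u).const_mul (Real.exp (2 * β * Real.sqrt t)))
        (fun s hs => by
          have hs2 : s ≤ u := hs.2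
          have : 2 * β * (t - s) ≤ 2 * β * Real.sqrt t := by
            have h1 : Real.sqrt t ≤ t - s := by simp only [hu] at hs2 ⊢; linarith
            nlinarith
          exact mul_le_mul_of_nonneg_right (Real.exp_le_exp.mpr this) (hδnonneg s))
      calc (∫ s in (0:ℝ)..u, Real.exp (2 * β * (t - s)) * δ s)
          ≤ ∫ s in (0:ℝ)..u, Real.exp (2 * β * Real.sqrt t) * δ s := this
        _ = Real.exp (2 * β * Real.sqrt t) * F u := by
            rw [intervalIntegral.integral_const_mul]
    have hb1' : Real.exp (2 * β * Real.sqrt t) * F u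
        ≤ Real.exp (2 * β * Real.sqrt t) * F t :=
      mul_le_mul_of_nonneg_left (hFmono hut) (Real.exp_pos _).le
    have hb2 : (∫ s in u..t, Real.exp (2 * β * (t - s)) * δ s) ≤ F t - F u := by
      rw [hFadd u t]
      refine intervalIntegral.integral_mono_on hut (hint t u t) (hδab u t)
        (fun s hs => ?_)
      have : Real.exp (2 * β * (t - s)) ≤ 1 := by
        rw [show (1:ℝ) = Real.exp 0 by simp]
        apply Real.exp_le_exp.mpr
        nlinarith [hs.2]
      calc Real.exp (2 * β * (t - s)) * δ s ≤ 1 * δ s :=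
            mul_le_mul_of_nonneg_right this (hδnonneg s)
        _ = δ s := one_mul _
    calc (∫ s in (0:ℝ)..t, Real.exp (2 * β * (t - s)) * δ s)
        = (∫ s in (0:ℝ)..u, Real.exp (2 * β * (t - s)) * δ s)
          + ∫ s in u..t, Real.exp (2 * β * (t - s)) * δ s := hsplit.symm
      _ ≤ Real.exp (2 * β * Real.sqrt t) * F t + (F t - F u) := by
          have := le_trans hb1 hb1'
          linarith
  -- G t / t^μ tends to 0
  have hexp : Tendsto (fun t : ℝ => Real.exp (2 * β * Real.sqrt t)) atTop (nhds 0) := by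
    apply Real.tendsto_exp_atBot.comp
    exact (tendsto_const_mul_atBot_of_neg (by linarith : 2 * β < 0)).mpr sqrt_tendsto_atTop
  have hcomp : Tendsto (fun t : ℝ => t - Real.sqrt t) atTop atTop := by
    apply tendsto_atTop_mono' atTop
      (eventually_atTop.mpr ⟨4, fun t ht => by
        have := sqrt_le_half ht; linarith⟩ :
        ∀ᶠ t : ℝ in atTop, t / 2 ≤ t - Real.sqrt t)
    exact tendsto_id.atTop_div_const (by norm_num)
  have hratio : Tendsto (fun t : ℝ => ((t - Real.sqrt t) / t) ^ μ) atTop (nhds 1) := by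
    have h1 : Tendsto (fun t : ℝ => (t - Real.sqrt t) / t) atTop (nhds 1) := by
      have h2 : Tendsto (fun t : ℝ => 1 - (Real.sqrt t)⁻¹) atTop (nhds 1) := by
        have := sqrt_tendsto_atTop.inv_tendsto_atTop
        have h3 : Tendsto (fun t : ℝ => 1 - (Real.sqrt t)⁻¹) atTop (nhds (1 - 0)) :=
          tendsto_const_nhds.sub this
        simpa using h3
      refine h2.congr' ?_
      filter_upwards [eventually_ge_atTop (4:ℝ)] with t ht
      have ht0 : 0 < t := by linarith
      have hst : 0 < Real.sqrt t := Real.sqrt_pos.mpr ht0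
      have hts : Real.sqrt t * Real.sqrt t = t := Real.mul_self_sqrt ht0.le
      field_simp
      nlinarith
    have hc : ContinuousAt (fun x : ℝ => x ^ μ) 1 :=
      Real.continuousAt_rpow_const 1 μ (Or.inl one_ne_zero)
    have := hc.tendsto.comp h1
    simpa [Real.one_rpow, Function.comp_def] using this
  have hFu : Tendsto (fun t : ℝ => F (t - Real.sqrt t) / t ^ μ) atTop (nhds ν) := by
    have hA : Tendsto (fun t : ℝ => F (t - Real.sqrt t) / (t - Real.sqrt t) ^ μ)
        atTop (nhds ν) := havg.comp hcomp
    have := hA.mul hratio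
    rw [mul_one] at this
    refine this.congr' ?_
    filter_upwards [eventually_ge_atTop (4:ℝ)] with t ht
    have ht0 : 0 < t := by linarith
    have hu0 : 0 < t - Real.sqrt t := by have := sqrt_le_half ht; linarith
    rw [Real.div_rpow hu0.le ht0.le]
    have h1 : (t - Real.sqrt t) ^ μ ≠ 0 := (Real.rpow_pos_of_pos hu0 μ).ne'
    have h2 : (t:ℝ) ^ μ ≠ 0 := (Real.rpow_pos_of_pos ht0 μ).ne'
    field_simp
    
  have hGlim : Tendsto (fun t : ℝ => G t / t ^ μ) atTop (nhds 0) := by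
    have h1 : Tendsto (fun t : ℝ => Real.exp (2 * β * Real.sqrt t) * (F t / t ^ μ)
        + (F t / t ^ μ - F (t - Real.sqrt t) / t ^ μ)) atTop (nhds (0 * ν + (ν - ν))) :=
      (hexp.mul havg).add (havg.sub hFu)
    simp only [zero_mul, sub_self, add_zero] at h1
    refine h1.congr (fun t => ?_)
    simp only [hGdef]
    ring
  -- squeeze
  refine tendsto_of_tendsto_of_tendsto_of_le_of_le' tendsto_const_nhds hGlim ?_ ?_
  · filter_upwards [eventually_ge_atTop (4:ℝ)] with t ht
    have ht0 : (0:ℝ) ≤ t := by linarith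
    have hI : 0 ≤ ∫ s in (0:ℝ)..t, Real.exp (2 * β * (t - s)) * δ s :=
      intervalIntegral.integral_nonneg ht0
        (fun s _ => mul_nonneg (Real.exp_pos _).le (hδnonneg s))
    positivity
  · filter_upwards [eventually_ge_atTop (4:ℝ)] with t ht
    have ht0 : (0:ℝ) < t := by linarith
    have htμ : (0:ℝ) < t ^ μ := Real.rpow_pos_of_pos ht0 μ
    exact div_le_div_of_nonneg_right (key t ht) htμ.le
end

section
/- (Kronecker's lemma for functions) Let Y : [0,∞) → ℝ be a càdlàg function of locally bounded variation and f : [0,∞) → (0,∞) a strictly positive increasing function with f(t) → ∞ as t → ∞. If the improper Stieltjes integral ∫_0^∞ dY(t)/f(t) exists (i.e. lim_{T→∞} ∫_0^T f(t)^{-1} dY(t) exists and is finite), then Y(t)/f(t) → 0 as t → ∞. -/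
open Real MeasureTheory Filter Set ENNReal

private lemma kron_fubini (μ : Measure ℝ) [SigmaFinite μ] (f' g : ℝ → ℝ)
    (hf'm : Measurable f') (hgm : Measurable g) (hg0 : ∀ t, 0 ≤ g t)
    (S T : ℝ) (hfT : 0 < f' T)
    (hw : ∀ t ∈ Set.Ioc S T, 0 < f' t ∧ f' t ≤ f' T)
    (hgi : IntegrableOn g (Set.Ioc S T) μ)
    (hh : Integrable (fun s => ∫ t in Set.Ioc S T ∩ {t | s * f' T < f' t}, g t ∂μ)
      (volume.restrict (Set.Ioc (0:ℝ) 1)))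
    (hh0 : ∀ s, 0 ≤ ∫ t in Set.Ioc S T ∩ {t | s * f' T < f' t}, g t ∂μ) :
    ∫ s in Set.Ioc (0:ℝ) 1, (∫ t in Set.Ioc S T ∩ {t | s * f' T < f' t}, g t ∂μ)
      = ∫ t in Set.Ioc S T, (f' t / f' T) * g t ∂μ := by
  set Fk : ℝ → ℝ → ℝ≥0∞ := fun s t =>
    if s * f' T < f' t then ENNReal.ofReal (g t) else 0 with hFk
  have hFm : Measurable (Function.uncurry Fk) := by
    have hset : MeasurableSet {p : ℝ × ℝ | p.1 * f' T < f' p.2} :=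
      measurableSet_lt (measurable_fst.mul_const _) (hf'm.comp measurable_snd)
    exact Measurable.ite hset ((hgm.comp measurable_snd).ennreal_ofReal) measurable_const
  -- integrability of w * g
  have hwgi : IntegrableOn (fun t => (f' t / f' T) * g t) (Set.Ioc S T) μ := by
    refine Integrable.mono hgi ((hf'm.div_const _).mul hgm).aestronglyMeasurable ?_
    filter_upwards [ae_restrict_mem measurableSet_Ioc] with t ht
    have h1 : 0 < f' t / f' T := div_pos (hw t ht).1 hfT
    have h2 : f' t / f' T ≤ 1 := (div_le_one hfT).2 (hw t ht).2
    rw [Real.norm_eq_abs, Real.norm_eq_abs, abs_mul, abs_of_pos h1, abs_of_nonneg (hg0 t)]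
    nlinarith [hg0 t, abs_nonneg (g t)]
  -- step 1 : pointwise layer-cake
  have step1 : ∀ t ∈ Set.Ioc S T,
      (∫⁻ s in Set.Ioc (0:ℝ) 1, Fk s t) = ENNReal.ofReal ((f' t / f' T) * g t) := by
    intro t ht
    have hw1 : 0 < f' t / f' T := div_pos (hw t ht).1 hfT
    have hw2 : f' t / f' T ≤ 1 := (div_le_one hfT).2 (hw t ht).2
    have hset : {s : ℝ | s * f' T < f' t} = Set.Iio (f' t / f' T) := by
      ext s; simp [Set.mem_Iio, lt_div_iff₀ hfT]
    have : (fun s => Fk s t) = Set.indicator {s : ℝ | s * f' T < f' t}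
        (fun _ => ENNReal.ofReal (g t)) := by
      ext s
      by_cases h : s * f' T < f' t <;> simp [hFk, h, Set.indicator_of_mem, Set.mem_setOf_eq]
    rw [this, hset, lintegral_indicator measurableSet_Iio, Measure.restrict_restrict measurableSet_Iio,
      setLIntegral_const]
    have hinter : Set.Iio (f' t / f' T) ∩ Set.Ioc (0:ℝ) 1 = Set.Ioo 0 (f' t / f' T) := by
      ext s
      constructor
      · rintro ⟨h1, h2, h3⟩; exact ⟨h2, h1⟩
      · rintro ⟨h1, h2⟩; exact ⟨h2, h1, le_trans h2.le hw2⟩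
    rw [hinter, Real.volume_Ioo, sub_zero, ← ENNReal.ofReal_mul (hg0 t)]
    ring_nf
  -- assemble via Tonelli
  have key : (∫⁻ t in Set.Ioc S T, ENNReal.ofReal ((f' t / f' T) * g t) ∂μ)
      = ∫⁻ s in Set.Ioc (0:ℝ) 1,
          ENNReal.ofReal (∫ t in Set.Ioc S T ∩ {t | s * f' T < f' t}, g t ∂μ) := by
    calc (∫⁻ t in Set.Ioc S T, ENNReal.ofReal ((f' t / f' T) * g t) ∂μ)
        = ∫⁻ t in Set.Ioc S T, (∫⁻ s in Set.Ioc (0:ℝ) 1, Fk s t) ∂μ := by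
          refine (setLIntegral_congr_fun measurableSet_Ioc ?_).symm
          exact step1
      _ = ∫⁻ s in Set.Ioc (0:ℝ) 1, (∫⁻ t in Set.Ioc S T, Fk s t ∂μ) := by
          exact lintegral_lintegral_swap ((hFm.comp measurable_swap).aemeasurable)
      _ = ∫⁻ s in Set.Ioc (0:ℝ) 1,
          ENNReal.ofReal (∫ t in Set.Ioc S T ∩ {t | s * f' T < f' t}, g t ∂μ) := by
          refine lintegral_congr fun s => ?_
          have hmset : MeasurableSet {t : ℝ | s * f' T < f' t} :=
            measurableSet_lt (measurable_const.mul_const _) hf'm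
          have : (fun t => Fk s t) = Set.indicator {t : ℝ | s * f' T < f' t}
              (fun t => ENNReal.ofReal (g t)) := by
            ext t
            by_cases h : s * f' T < f' t <;> simp [hFk, h]
          rw [this, lintegral_indicator hmset, Measure.restrict_restrict hmset,
            Set.inter_comm]
          exact (ofReal_integral_eq_lintegral_ofReal
            (hgi.mono_set Set.inter_subset_left)
            (Filter.Eventually.of_forall fun t => hg0 t)).symm
  have h1 := ofReal_integral_eq_lintegral_ofReal hwgi ?_
  · have h2 := ofReal_integral_eq_lintegral_ofReal hh
      (Filter.Eventually.of_forall fun s => hh0 s)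
    have := h1.trans (key.trans h2.symm)
    have hnn1 : 0 ≤ ∫ t in Set.Ioc S T, (f' t / f' T) * g t ∂μ := by
      refine setIntegral_nonneg measurableSet_Ioc fun t ht => ?_
      exact mul_nonneg (div_pos (hw t ht).1 hfT).le (hg0 t)
    have hnn2 : 0 ≤ ∫ s in Set.Ioc (0:ℝ) 1,
        (∫ t in Set.Ioc S T ∩ {t | s * f' T < f' t}, g t ∂μ) :=
      setIntegral_nonneg measurableSet_Ioc fun s _ => hh0 s
    exact ((ENNReal.ofReal_eq_ofReal_iff hnn1 hnn2).1 this).symm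
  · filter_upwards [ae_restrict_mem measurableSet_Ioc] with t ht
    exact mul_nonneg (div_pos (hw t ht).1 hfT).le (hg0 t)



private lemma kron_core (Y₁ Y₂ : StieltjesFunction ℝ) (f' : ℝ → ℝ)
    (hmono : Monotone f') (hpos : ∀ t, 0 < f' t) (hmeas : Measurable f')
    (S T ε' : ℝ) (hS : 0 < S) (hST : S ≤ T) (hε' : 0 ≤ ε')
    (hint₁ : IntegrableOn (fun t => (f' t)⁻¹) (Set.Ioc 0 T) Y₁.measure)
    (hint₂ : IntegrableOn (fun t => (f' t)⁻¹) (Set.Ioc 0 T) Y₂.measure)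
    (hbound : ∀ u ∈ Set.Icc S T,
      |(∫ t in Set.Ioc u T, (f' t)⁻¹ ∂Y₁.measure) -
        (∫ t in Set.Ioc u T, (f' t)⁻¹ ∂Y₂.measure)| ≤ ε') :
    |(Y₁ T - Y₂ T) - (Y₁ S - Y₂ S)| ≤ ε' * f' T := by
  set g : ℝ → ℝ := fun t => (f' t)⁻¹ with hg
  have hgm : Measurable g := hmeas.inv
  have hg0 : ∀ t, 0 ≤ g t := fun t => (inv_pos.2 (hpos t)).le
  set μ₁ := Y₁.measure
  set μ₂ := Y₂.measure
  set E : ℝ → Set ℝ := fun s => Set.Ioc S T ∩ {t | s * f' T < f' t} with hE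
  have hEsub : ∀ s, E s ⊆ Set.Ioc 0 T :=
    fun s => Set.inter_subset_left.trans (Set.Ioc_subset_Ioc_left hS.le)
  have hIocsub : Set.Ioc S T ⊆ Set.Ioc 0 T := Set.Ioc_subset_Ioc_left hS.le
  have hgi₁T : IntegrableOn g (Set.Ioc S T) μ₁ := hint₁.mono_set hIocsub
  have hgi₂T : IntegrableOn g (Set.Ioc S T) μ₂ := hint₂.mono_set hIocsub
  have hgi₁ : ∀ s, IntegrableOn g (E s) μ₁ := fun s => hint₁.mono_set (hEsub s)
  have hgi₂ : ∀ s, IntegrableOn g (E s) μ₂ := fun s => hint₂.mono_set (hEsub s)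
  set h₁ : ℝ → ℝ := fun s => ∫ t in E s, g t ∂μ₁ with hh₁
  set h₂ : ℝ → ℝ := fun s => ∫ t in E s, g t ∂μ₂ with hh₂
  have hEanti : Antitone E := by
    intro s s' hss' t ht
    exact ⟨ht.1, lt_of_le_of_lt (mul_le_mul_of_nonneg_right hss' (hpos T).le) ht.2⟩
  have hanti : ∀ (μ : Measure ℝ), IntegrableOn g (Set.Ioc S T) μ →
      Antitone (fun s => ∫ t in E s, g t ∂μ) := by
    intro μ hμ s s' hss'
    refine setIntegral_mono_set (hμ.mono_set Set.inter_subset_left)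
      (Filter.Eventually.of_forall fun t => hg0 t)
      (HasSubset.Subset.eventuallyLE (hEanti hss'))
  have hnn : ∀ (μ : Measure ℝ) s, 0 ≤ ∫ t in E s, g t ∂μ := by
    intro μ s
    exact setIntegral_nonneg (measurableSet_Ioc.inter
      (measurableSet_lt (measurable_const.mul_const _) hmeas)) fun t _ => hg0 t
  have hIntb : ∀ (μ : Measure ℝ), IntegrableOn g (Set.Ioc S T) μ →
      IntegrableOn (fun s => ∫ t in E s, g t ∂μ) (Set.Ioc (0:ℝ) 1) volume := by
    intro μ hμ
    have hm : Measurable (fun s => ∫ t in E s, g t ∂μ) := (hanti μ hμ).measurable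
    refine Measure.integrableOn_of_bounded (M := ∫ t in E 0, g t ∂μ)
      measure_Ioc_lt_top.ne hm.aestronglyMeasurable ?_
    filter_upwards [ae_restrict_mem measurableSet_Ioc] with s hs
    rw [Real.norm_eq_abs, abs_of_nonneg (hnn μ s)]
    exact hanti μ hμ hs.1.le
  -- slice bound
  have hslice : ∀ s ∈ Set.Ioc (0:ℝ) 1, |h₁ s - h₂ s| ≤ ε' := by
    intro s _
    by_cases hne : (E s).Nonempty
    · set c := sInf (E s) with hc
      have hbdd : BddBelow (E s) := (bddBelow_Ioc (a := T) (b := S)).mono Set.inter_subset_left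
      have hcS : S ≤ c := le_csInf hne fun t ht => ht.1.1.le
      obtain ⟨t₀, ht₀⟩ := id hne
      have hcT : c ≤ T := le_trans (csInf_le hbdd ht₀) ht₀.1.2
      have hIoc_sub : Set.Ioc c T ⊆ E s := by
        intro t ht
        obtain ⟨t', ht', hlt⟩ := exists_lt_of_csInf_lt hne ht.1
        exact ⟨⟨lt_of_le_of_lt hcS ht.1, ht.2⟩, lt_of_lt_of_le ht'.2 (hmono hlt.le)⟩
      have hsub' : E s ⊆ Set.Icc c T := fun t ht => ⟨csInf_le hbdd ht, ht.1.2⟩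
      by_cases hcE : c ∈ E s
      · -- E s = Icc c T, use limiting argument
        have hSc : S < c := hcE.1.1
        have hEeq : E s = Set.Icc c T := by
          apply Set.Subset.antisymm hsub'
          intro t ht
          rcases eq_or_lt_of_le ht.1 with h | h
          · rwa [← h]
          · exact hIoc_sub ⟨h, ht.2⟩
        set u : ℕ → ℝ := fun n => c - (c - S) / (n + 1) with hu
        have hu_lt : ∀ n, u n < c := by
          intro n
          have : 0 < (c - S) / (n + 1 : ℝ) :=
            div_pos (sub_pos.2 hSc) (by positivity)
          simp only [hu]; linarith
        have hu_mem : ∀ n, u n ∈ Set.Icc S T := by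
          intro n
          constructor
          · have h1 : (c - S) / (n + 1 : ℝ) ≤ c - S := by
              apply div_le_self (sub_pos.2 hSc).le
              simp [le_add_iff_nonneg_left]
            simp only [hu]; linarith
          · exact le_trans (hu_lt n).le hcT
        have hu_tend : Tendsto u atTop (nhds c) := by
          have h1 : Tendsto (fun n : ℕ => (c - S) / (n + 1 : ℝ)) atTop (nhds 0) := by
            simpa [div_eq_mul_inv] using (tendsto_const_nhds (x := c - S)).mul (tendsto_one_div_add_atTop_nhds_zero_nat)
          simpa using tendsto_const_nhds.sub h1
        -- convergence of integrals
        have hconvInt : ∀ (μ : Measure ℝ), IntegrableOn g (Set.Ioc 0 T) μ →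
            Tendsto (fun n => ∫ t in Set.Ioc (u n) T, g t ∂μ) atTop
              (nhds (∫ t in Set.Icc c T, g t ∂μ)) := by
          intro μ hμ
          have hrewr : ∀ n, (∫ t in Set.Ioc (u n) T, g t ∂μ)
              = ∫ t in Set.Ioc 0 T, Set.indicator (Set.Ioc (u n) T) g t ∂μ := by
            intro n
            rw [setIntegral_indicator measurableSet_Ioc, Set.Ioc_inter_Ioc]
            congr 1
            rw [max_eq_right, min_self]
            exact le_trans hS.le (hu_mem n).1
          have hrewr2 : (∫ t in Set.Icc c T, g t ∂μ)
              = ∫ t in Set.Ioc 0 T, Set.indicator (Set.Icc c T) g t ∂μ := by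
            rw [setIntegral_indicator measurableSet_Icc,
              Set.inter_eq_self_of_subset_right (show Set.Icc c T ⊆ Set.Ioc 0 T from fun t ht => Set.mem_Ioc.2 ⟨lt_trans hS (lt_of_lt_of_le hSc ht.1), ht.2⟩)]
          rw [hrewr2]
          simp only [hrewr]
          refine tendsto_integral_of_dominated_convergence g
            (fun n => (hgm.indicator measurableSet_Ioc).aestronglyMeasurable)
            hμ ?_ ?_
          · intro n
            filter_upwards with t
            rw [Real.norm_eq_abs]
            by_cases h : t ∈ Set.Ioc (u n) T
            · rw [Set.indicator_of_mem h]; simp [abs_of_nonneg (hg0 t)]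
            · rw [Set.indicator_of_notMem h]; simp [abs_nonneg, hg0 t]
          · filter_upwards with t
            by_cases ht : t ∈ Set.Icc c T
            · have : ∀ n, Set.indicator (Set.Ioc (u n) T) g t = g t := by
                intro n
                exact Set.indicator_of_mem (Set.mem_Ioc.2 ⟨lt_of_le_of_lt' ht.1 (hu_lt n), ht.2⟩) g
              rw [Set.indicator_of_mem ht]
              simpa [this] using tendsto_const_nhds
            · rw [Set.indicator_of_notMem ht]
              rcases not_and_or.1 ht with h | h
              · push_neg at h
                have : ∀ᶠ n in atTop, Set.indicator (Set.Ioc (u n) T) g t = 0 := by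
                  filter_upwards [hu_tend.eventually (eventually_gt_nhds h)] with n hn
                  exact Set.indicator_of_notMem (fun hmem => absurd hmem.1 (not_lt.2 hn.le)) g
                exact Tendsto.congr' (this.mono fun n hn => hn.symm) tendsto_const_nhds
              · push_neg at h
                have : ∀ n, Set.indicator (Set.Ioc (u n) T) g t = 0 := by
                  intro n
                  exact Set.indicator_of_notMem (fun hmem => absurd hmem.2 (not_le.2 h)) g
                simpa [this] using tendsto_const_nhds
        have htd : Tendsto (fun n => (∫ t in Set.Ioc (u n) T, g t ∂μ₁)
            - (∫ t in Set.Ioc (u n) T, g t ∂μ₂)) atTop (nhds (h₁ s - h₂ s)) := by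
          rw [hh₁, hh₂]
          simp only [hEeq]
          exact (hconvInt μ₁ hint₁).sub (hconvInt μ₂ hint₂)
        refine le_of_tendsto htd.abs ?_
        filter_upwards with n
        exact hbound (u n) (hu_mem n)
      · -- E s = Ioc c T
        have hEeq : E s = Set.Ioc c T := by
          apply Set.Subset.antisymm _ hIoc_sub
          intro t ht
          rcases eq_or_lt_of_le (csInf_le hbdd ht) with h | h
          · exact absurd (show c ∈ E s by rwa [hc, h]) hcE
          · exact ⟨h, ht.1.2⟩
        have : h₁ s - h₂ s = (∫ t in Set.Ioc c T, g t ∂μ₁) - ∫ t in Set.Ioc c T, g t ∂μ₂ := by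
          rw [hh₁, hh₂]; simp only [hEeq]
        rw [this]
        exact hbound c ⟨hcS, hcT⟩
    · have : E s = ∅ := Set.not_nonempty_iff_eq_empty.1 hne
      simp [hh₁, hh₂, this, hε']
  -- Fubini for both measures
  have hw : ∀ t ∈ Set.Ioc S T, 0 < f' t ∧ f' t ≤ f' T := fun t ht => ⟨hpos t, hmono ht.2⟩
  have hfub₁ := kron_fubini μ₁ f' g hmeas hgm hg0 S T (hpos T) hw hgi₁T
    (hIntb μ₁ hgi₁T) (hnn μ₁)
  have hfub₂ := kron_fubini μ₂ f' g hmeas hgm hg0 S T (hpos T) hw hgi₂T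
    (hIntb μ₂ hgi₂T) (hnn μ₂)
  -- value of the weighted integral
  have hval : ∀ (Y : StieltjesFunction ℝ),
      (∫ t in Set.Ioc S T, (f' t / f' T) * g t ∂Y.measure) = (Y T - Y S) / f' T := by
    intro Y
    have : ∀ t ∈ Set.Ioc S T, (f' t / f' T) * g t = (f' T)⁻¹ := by
      intro t _
      rw [hg, div_mul_eq_mul_div, mul_inv_cancel₀ (hpos t).ne', one_div]
    rw [setIntegral_congr_fun measurableSet_Ioc this, setIntegral_const,
      measureReal_def, Y.measure_Ioc, ENNReal.toReal_ofReal (sub_nonneg.2 (Y.mono hST)), smul_eq_mul,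
      div_eq_mul_inv]
  -- combine
  have hint_h₁ : IntegrableOn h₁ (Set.Ioc (0:ℝ) 1) volume := hIntb μ₁ hgi₁T
  have hint_h₂ : IntegrableOn h₂ (Set.Ioc (0:ℝ) 1) volume := hIntb μ₂ hgi₂T
  have hsum : (∫ s in Set.Ioc (0:ℝ) 1, (h₁ s - h₂ s))
      = ((Y₁ T - Y₁ S) - (Y₂ T - Y₂ S)) / f' T := by
    rw [integral_sub hint_h₁ hint_h₂, hfub₁, hfub₂, hval Y₁, hval Y₂]; ring
  have hle : |∫ s in Set.Ioc (0:ℝ) 1, (h₁ s - h₂ s)| ≤ ε' := by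
    have := norm_setIntegral_le_of_norm_le_const (μ := volume) (s := Set.Ioc (0:ℝ) 1)
      (f := fun s => h₁ s - h₂ s) measure_Ioc_lt_top
      (fun s hs => by rw [Real.norm_eq_abs]; exact hslice s hs)
    simpa [Measure.real, Real.volume_Ioc] using this
  rw [hsum] at hle
  have h1 : |(Y₁ T - Y₁ S) - (Y₂ T - Y₂ S)| ≤ ε' * f' T := by
    rw [abs_div, abs_of_pos (hpos T), div_le_iff₀ (hpos T)] at hle
    linarith
  calc |(Y₁ T - Y₂ T) - (Y₁ S - Y₂ S)| = |(Y₁ T - Y₁ S) - (Y₂ T - Y₂ S)| := by ring_nf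
    _ ≤ ε' * f' T := h1

/-- Kronecker's lemma for functions: let `Y = Y₁ - Y₂` be a càdlàg function of
locally bounded variation on `[0,∞)` (written as a difference of two Stieltjes
functions, i.e. monotone right-continuous functions), and let `f` be a strictly
positive increasing function on `[0,∞)` with `f(t) → ∞`.  If the improper
Stieltjes integral `∫_0^∞ f(t)⁻¹ dY(t)` exists, i.e.
`∫_{(0,T]} f⁻¹ dY₁ - ∫_{(0,T]} f⁻¹ dY₂` converges to a finite limit as `T → ∞`,
then `Y(t)/f(t) → 0` as `t → ∞`. -/
theorem stmt9 (Y₁ Y₂ : StieltjesFunction ℝ) (f : ℝ → ℝ) (I : ℝ)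
    (hf_pos : ∀ t : ℝ, 0 ≤ t → 0 < f t)
    (hf_mono : MonotoneOn f (Set.Ici (0:ℝ)))
    (hf_top : Tendsto f atTop atTop)
    (hint : ∀ T : ℝ, 0 < T →
      IntegrableOn (fun t => (f t)⁻¹) (Set.Ioc 0 T) Y₁.measure ∧
      IntegrableOn (fun t => (f t)⁻¹) (Set.Ioc 0 T) Y₂.measure)
    (hconv : Tendsto (fun T : ℝ =>
        (∫ t in Set.Ioc (0:ℝ) T, (f t)⁻¹ ∂Y₁.measure) -
        (∫ t in Set.Ioc (0:ℝ) T, (f t)⁻¹ ∂Y₂.measure)) atTop (nhds I)) :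
    Tendsto (fun t : ℝ => (Y₁ t - Y₂ t) / f t) atTop (nhds 0) := by
  set f' : ℝ → ℝ := fun t => f (max t 0) with hf'
  have hmono : Monotone f' := fun a b hab =>
    hf_mono (Set.mem_Ici.2 (le_max_right a 0)) (Set.mem_Ici.2 (le_max_right b 0))
      (max_le_max hab le_rfl)
  have hpos : ∀ t, 0 < f' t := fun t => hf_pos _ (le_max_right t 0)
  have hmeas : Measurable f' := hmono.measurable
  have heq : ∀ t : ℝ, 0 ≤ t → f' t = f t := fun t ht => by
    rw [hf']; simp [max_eq_left ht]
  have heqOn : ∀ T : ℝ, Set.EqOn (fun t => (f t)⁻¹) (fun t => (f' t)⁻¹) (Set.Ioc 0 T) :=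
    fun T t ht => by simp [heq t ht.1.le]
  have hint' : ∀ T : ℝ, 0 < T →
      IntegrableOn (fun t => (f' t)⁻¹) (Set.Ioc 0 T) Y₁.measure ∧
      IntegrableOn (fun t => (f' t)⁻¹) (Set.Ioc 0 T) Y₂.measure := by
    intro T hT
    exact ⟨((hint T hT).1.congr_fun (heqOn T) measurableSet_Ioc),
      ((hint T hT).2.congr_fun (heqOn T) measurableSet_Ioc)⟩
  set G : ℝ → ℝ := fun T => (∫ t in Set.Ioc (0:ℝ) T, (f' t)⁻¹ ∂Y₁.measure) -
      (∫ t in Set.Ioc (0:ℝ) T, (f' t)⁻¹ ∂Y₂.measure) with hG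
  have hGconv : Tendsto G atTop (nhds I) := by
    refine hconv.congr fun T => ?_
    simp only [hG]
    congr 1 <;> exact setIntegral_congr_fun measurableSet_Ioc (heqOn T)
  rw [NormedAddCommGroup.tendsto_nhds_zero]
  intro ε hε
  obtain ⟨N, hN⟩ := Metric.tendsto_atTop.1 hGconv (ε/4) (by positivity)
  set S : ℝ := max N 1 with hSdef
  have hS : 0 < S := lt_of_lt_of_le one_pos (le_max_right N 1)
  have hNS : ∀ u, S ≤ u → |G u - I| < ε/4 := by
    intro u hu
    have := hN u (le_trans (le_max_left N 1) hu)
    rwa [Real.dist_eq] at this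
  -- additivity of the tail integrals
  have htail : ∀ u T : ℝ, 0 < u → u ≤ T →
      (∫ t in Set.Ioc u T, (f' t)⁻¹ ∂Y₁.measure) -
        (∫ t in Set.Ioc u T, (f' t)⁻¹ ∂Y₂.measure) = G T - G u := by
    intro u T hu huT
    have hsplit : ∀ (Y : StieltjesFunction ℝ),
        IntegrableOn (fun t => (f' t)⁻¹) (Set.Ioc 0 T) Y.measure →
        (∫ t in Set.Ioc (0:ℝ) T, (f' t)⁻¹ ∂Y.measure)
          = (∫ t in Set.Ioc (0:ℝ) u, (f' t)⁻¹ ∂Y.measure)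
            + ∫ t in Set.Ioc u T, (f' t)⁻¹ ∂Y.measure := by
      intro Y hY
      rw [← setIntegral_union (Set.Ioc_disjoint_Ioc_of_le le_rfl) measurableSet_Ioc
        (hY.mono_set (Set.Ioc_subset_Ioc_right huT))
        (hY.mono_set (Set.Ioc_subset_Ioc_left hu.le)),
        Set.Ioc_union_Ioc_eq_Ioc hu.le huT]
    have hT : 0 < T := lt_of_lt_of_le hu huT
    simp only [hG]
    rw [hsplit Y₁ (hint' T hT).1, hsplit Y₂ (hint' T hT).2]
    ring
  have hcore : ∀ T, S ≤ T →
      |(Y₁ T - Y₂ T) - (Y₁ S - Y₂ S)| ≤ (ε/2) * f' T := by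
    intro T hT
    refine kron_core Y₁ Y₂ f' hmono hpos hmeas S T (ε/2) hS hT (by positivity)
      (hint' T (lt_of_lt_of_le hS hT)).1 (hint' T (lt_of_lt_of_le hS hT)).2 ?_
    intro u hu
    rw [htail u T (lt_of_lt_of_le hS hu.1) hu.2]
    have h1 := hNS T hT
    have h2 := hNS u hu.1
    have h3 : |G T - G u| ≤ |G T - I| + |I - G u| := abs_sub_le _ _ _
    rw [abs_sub_comm I (G u)] at h3
    linarith
  -- final step
  set C : ℝ := |Y₁ S - Y₂ S| with hC
  have hεne : ε ≠ 0 := ne_of_gt hε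
  have hev1 : ∀ᶠ t in atTop, 2*C/ε + 1 ≤ f t := hf_top.eventually (eventually_ge_atTop _)
  filter_upwards [hev1, eventually_ge_atTop S] with t htf hts
  have ht0 : (0:ℝ) ≤ t := le_trans hS.le hts
  have hft : f' t = f t := heq t ht0
  have hfpos : 0 < f t := hf_pos t ht0
  have hkey := hcore t hts
  rw [hft] at hkey
  have h5 : (ε/2) * (2*C/ε + 1) ≤ (ε/2) * f t := mul_le_mul_of_nonneg_left htf (by positivity)
  have h6 : (ε/2) * (2*C/ε + 1) = C + ε/2 := by field_simp
  have hCb : C < (ε/2) * f t := by nlinarith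
  have habs : |Y₁ t - Y₂ t| - |Y₁ S - Y₂ S| ≤ |(Y₁ t - Y₂ t) - (Y₁ S - Y₂ S)| :=
    abs_sub_abs_le_abs_sub _ _
  rw [Real.norm_eq_abs, abs_div, abs_of_pos hfpos, div_lt_iff₀ hfpos]
  rw [← hC] at habs
  nlinarith
end
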